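/- arXiv:math/9807011 — 5 statements merged into one kernel-verified Lean document; each statement's English description precedes it below -/
import Mathlib

section
/- Let G be a finite group acting by homeomorphisms on a compact metrizable topological space X, let x₀ ∈ X be a fixed point of the action, and let q : X → X/G denote the quotient map onto the orbit space X/G equipped with the quotient topology. Then the induced homomorphism q_* : π₁(X, x₀) → π₁(X/G, q(x₀)) of fundamental groups is surjective. -/
set_option linter.unusedSectionVars false
set_option linter.unusedVariables false
set_option maxHeartbeats 1000000

open CategoryTheory FundamentalGroupoid

/-!
Path lifting for finite group actions: auxiliary development.
-/

noncomputable section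

namespace GPL

open Set MulAction Topology

universe u v

variable {G : Type u} [Group G] {Y : Type v} [TopologicalSpace Y]
  [MulAction G Y] [ContinuousConstSMul G Y]

lemma mk_eq_mk_iff {a b : Y} :
    (Quotient.mk (orbitRel G Y) a = Quotient.mk (orbitRel G Y) b) ↔ ∃ g : G, g • b = a := by
  rw [Quotient.eq]
  exact (MulAction.orbitRel_apply).trans MulAction.mem_orbit_iff

lemma mk_smul (g : G) (a : Y) :
    Quotient.mk (orbitRel G Y) (g • a) = Quotient.mk (orbitRel G Y) a :=
  mk_eq_mk_iff.2 ⟨g, rfl⟩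

lemma isOpenMap_mk : IsOpenMap (Quotient.mk (orbitRel G Y)) :=
  isOpenMap_quotient_mk'_mul

lemma isClosedMap_mk [Finite G] : IsClosedMap (Quotient.mk (orbitRel G Y)) := by
  letI := orbitRel G Y
  intro F hF
  have hq : Topology.IsQuotientMap (Quotient.mk (orbitRel G Y)) := isQuotientMap_quotient_mk'
  rw [← hq.isClosed_preimage]
  have h2 : (Quotient.mk (orbitRel G Y)) ⁻¹' (Quotient.mk (orbitRel G Y) '' F)
      = ⋃ g : G, (fun x => g • x) '' F := MulAction.quotient_preimage_image_eq_union_mul F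
  rw [h2]
  exact isClosed_iUnion_of_finite fun g => (isClosedMap_smul g) F hF

/-- the shrinking-fibers property of closed maps -/
lemma exists_open_of_closedMap {Z : Type*} [TopologicalSpace Z] {f : Y → Z}
    (hf : IsClosedMap f) {z : Z} {V : Set Y} (hV : IsOpen V) (h : f ⁻¹' {z} ⊆ V) :
    ∃ W : Set Z, IsOpen W ∧ z ∈ W ∧ f ⁻¹' W ⊆ V := by
  refine ⟨(f '' Vᶜ)ᶜ, by simpa using hf _ hV.isClosed_compl, ?_, ?_⟩
  · simp only [mem_compl_iff, mem_image, not_exists, not_and]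
    intro w hw hfw
    exact hw (h (by simp [hfw]))
  · intro y hy
    by_contra hyV
    exact hy ⟨y, hyV, rfl⟩


/-- Gluing two continuous functions on adjacent intervals. -/
lemma glue_continuousOn {f g : ℝ → Y} {a b c : ℝ} (hab : a ≤ b) (hbc : b ≤ c)
    (hf : ContinuousOn f (Icc a b)) (hg : ContinuousOn g (Icc b c)) (hfg : f b = g b) :
    ContinuousOn (fun s => if s ≤ b then f s else g s) (Icc a c) := by
  set h : ℝ → Y := fun s => if s ≤ b then f s else g s with hh
  have e1 : ∀ y ∈ Icc a b, h y = f y := fun y hy => if_pos hy.2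
  have e2 : ∀ y ∈ Icc b c, h y = g y := by
    intro y hy
    rcases eq_or_lt_of_le hy.1 with h' | h'
    · simp [hh, ← h', hfg]
    · simp [hh, not_le.2 h']
  intro x hx
  have hu : Icc a c ⊆ Icc a b ∪ Icc b c := by
    intro y hy
    rcases le_total y b with h' | h'
    · exact Or.inl ⟨hy.1, h'⟩
    · exact Or.inr ⟨h', hy.2⟩
  have cwa1 : x ∈ Icc a b → ContinuousWithinAt h (Icc a b) x := fun hx' =>
    (hf x hx').congr e1 (e1 x hx')
  have cwa2 : x ∈ Icc b c → ContinuousWithinAt h (Icc b c) x := fun hx' =>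
    (hg x hx').congr e2 (e2 x hx')
  refine ContinuousWithinAt.mono ?_ hu
  rcases lt_trichotomy x b with hxb | hxb | hxb
  · refine ContinuousWithinAt.union (cwa1 ⟨hx.1, hxb.le⟩) ?_
    refine continuousWithinAt_of_notMem_closure ?_
    rw [isClosed_Icc.closure_eq]
    exact fun hmem => absurd hmem.1 (not_le.2 hxb)
  · exact ContinuousWithinAt.union (cwa1 ⟨hx.1, hxb.le⟩) (cwa2 ⟨hxb.ge, hx.2⟩)
  · refine ContinuousWithinAt.union ?_ (cwa2 ⟨hxb.le, hx.2⟩)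
    refine continuousWithinAt_of_notMem_closure ?_
    rw [isClosed_Icc.closure_eq]
    exact fun hmem => absurd hmem.2 (not_le.2 hxb)


/-- Existence of a slice neighborhood around any point, for a finite group action on a
Hausdorff space. -/
lemma exists_slice [Finite G] [T2Space Y] (y : Y) :
    ∃ U : Set Y, IsOpen U ∧ y ∈ U ∧
      (∀ h : G, h ∈ stabilizer G y → ∀ u ∈ U, h • u ∈ U) ∧
      (∀ g : G, g ∉ stabilizer G y → ∀ u ∈ U, g • u ∉ U) := by
  -- separating neighborhoods V g
  have hsep : ∀ g : G, ∃ V : Set Y, IsOpen V ∧ y ∈ V ∧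
      (g ∉ stabilizer G y → ∀ v ∈ V, g • v ∉ V) := by
    intro g
    by_cases hg : g ∈ stabilizer G y
    · exact ⟨univ, isOpen_univ, mem_univ y, fun h => absurd hg h⟩
    · have hne : g • y ≠ y := hg
      obtain ⟨A, B, hA, hB, hgyA, hyB, hAB⟩ := t2_separation hne
      refine ⟨B ∩ (fun v => g • v) ⁻¹' A, hB.inter ((continuous_const_smul g).isOpen_preimage A hA),
        ⟨hyB, by simpa using hgyA⟩, fun _ v hv hgv => ?_⟩
      exact absurd rfl (hAB.ne_of_mem hv.2 hgv.1)
  choose V hVopen hyV hVsep using hsep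
  set W : Set Y := ⋂ g : G, V g with hW
  have hWopen : IsOpen W := isOpen_iInter_of_finite hVopen
  have hyW : y ∈ W := mem_iInter.2 hyV
  set U : Set Y := ⋂ h : stabilizer G y, (fun v => (h : G)⁻¹ • v) ⁻¹' W with hU
  have hUopen : IsOpen U :=
    isOpen_iInter_of_finite fun h => (continuous_const_smul _).isOpen_preimage W hWopen
  have hUW : U ⊆ W := by
    intro u hu
    have := mem_iInter.1 hu ⟨1, one_mem _⟩
    simpa using this
  refine ⟨U, hUopen, ?_, ?_, ?_⟩
  · refine mem_iInter.2 fun h => ?_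
    have : (h : G)⁻¹ • y = y := by
      have := h.2
      rw [mem_stabilizer_iff] at this
      rw [inv_smul_eq_iff, this]
    simpa [this] using hyW
  · intro h hh u hu
    refine mem_iInter.2 fun h' => ?_
    have hmem := mem_iInter.1 hu ⟨h⁻¹ * (h' : G), mul_mem (inv_mem hh) h'.2⟩
    simp only [mem_preimage] at hmem ⊢
    rw [← mul_smul,
      show ((h' : G))⁻¹ * h = (h⁻¹ * (h' : G))⁻¹ by rw [mul_inv_rev, inv_inv]]
    exact hmem
  · intro g hg u hu hgu
    have hWV : ∀ g' : G, W ⊆ V g' := fun g' => iInter_subset V g'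
    have h1 : u ∈ V g := hWV g (hUW hu)
    have h2 : g • u ∈ V g := hWV g (hUW hgu)
    exact hVsep g hg u h1 h2


/-- Local lifting of a path near a parameter whose fiber has nontrivial orbit, assuming the
lifting theorem for all smaller groups. -/
lemma local_lift [Finite G] [T2Space Y]
    (IH : ∀ {G' : Type u} [Group G'] [Finite G'] {Y' : Type v} [TopologicalSpace Y'] [T2Space Y']
      [MulAction G' Y'] [ContinuousConstSMul G' Y'], Nat.card G' < Nat.card G →
      ∀ γ' : ℝ → Quotient (orbitRel G' Y'), Continuous γ' →
      ∃ ℓ : ℝ → Y', Continuous ℓ ∧ ∀ t, Quotient.mk (orbitRel G' Y') (ℓ t) = γ' t)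
    (γ : ℝ → Quotient (orbitRel G Y)) (hγ : Continuous γ) (t : ℝ)
    (ht : γ t ∉ Quotient.mk (orbitRel G Y) '' {y : Y | ∀ g : G, g • y = y}) :
    ∃ ε > 0, ∃ m : ℝ → Y, Continuous m ∧
      ∀ s ∈ Ioo (t - ε) (t + ε), Quotient.mk (orbitRel G Y) (m s) = γ s := by
  obtain ⟨y, hy⟩ := Quotient.exists_rep (γ t)
  set H := stabilizer G y with hH
  have hHne : H ≠ ⊤ := by
    intro htop
    refine ht ⟨y, fun g => ?_, hy⟩
    have : g ∈ H := htop ▸ Subgroup.mem_top g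
    exact this
  obtain ⟨U, hUopen, hyU, hinv, hdisj⟩ := exists_slice (G := G) y
  -- the action of H on U
  letI : SMul H U := ⟨fun h u => ⟨(h : G) • (u : Y), hinv h h.2 u u.2⟩⟩
  have smul_def : ∀ (h : H) (u : U), ((h • u : U) : Y) = (h : G) • (u : Y) := fun _ _ => rfl
  letI : MulAction H U :=
    { one_smul := fun u => Subtype.ext (by rw [smul_def]; simp)
      mul_smul := fun h h' u => Subtype.ext (by simp only [smul_def]; rw [Subgroup.coe_mul, mul_smul]) }
  letI : ContinuousConstSMul H U :=
    ⟨fun h => Continuous.subtype_mk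
      ((continuous_const_smul ((h : G))).comp continuous_subtype_val) _⟩
  -- the induced injective open map between quotients
  have hwd : ∀ a b : U, (orbitRel H U) a b →
      Quotient.mk (orbitRel G Y) (a : Y) = Quotient.mk (orbitRel G Y) (b : Y) := by
    intro a b hab
    rw [MulAction.orbitRel_apply] at hab
    obtain ⟨h, rfl⟩ := hab
    rw [smul_def]
    exact mk_eq_mk_iff.2 ⟨h, rfl⟩
  set j : Quotient (orbitRel H U) → Quotient (orbitRel G Y) :=
    Quotient.lift (fun u : U => Quotient.mk (orbitRel G Y) (u : Y)) hwd with hj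
  have hj_mk : ∀ u : U, j (Quotient.mk (orbitRel H U) u) = Quotient.mk (orbitRel G Y) (u : Y) :=
    fun u => rfl
  have hj_inj : Function.Injective j := by
    intro a b
    induction a using Quotient.ind with | _ a =>
    induction b using Quotient.ind with | _ b =>
    intro hab
    rw [hj_mk, hj_mk, mk_eq_mk_iff] at hab
    obtain ⟨g, hg⟩ := hab
    by_cases hgH : g ∈ H
    · exact Quotient.sound (MulAction.orbitRel_apply.2 ⟨⟨g, hgH⟩, Subtype.ext hg⟩)
    · exact absurd (hg ▸ hdisj g hgH (b : Y) b.2) (by simp [a.2])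
  have hj_cont : Continuous j :=
    Continuous.quotient_lift (continuous_quot_mk.comp continuous_subtype_val) hwd
  have hj_open : IsOpenMap j := by
    intro O hO
    have himg : j '' O = Quotient.mk (orbitRel G Y) ''
        (Subtype.val '' (Quotient.mk (orbitRel H U) ⁻¹' O)) := by
      ext z
      constructor
      · rintro ⟨qo, hqo, rfl⟩
        induction qo using Quotient.ind with | _ u =>
        exact ⟨(u : Y), ⟨u, hqo, rfl⟩, (hj_mk u).symm⟩
      · rintro ⟨yy, ⟨u, hu, rfl⟩, rfl⟩
        exact ⟨Quotient.mk (orbitRel H U) u, hu, hj_mk u⟩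
    rw [himg]
    exact (isOpenMap_quotient_mk'_mul (Γ := G)) _
      (hUopen.isOpenMap_subtype_val _ (hO.preimage continuous_quot_mk))
  have hj_emb : IsOpenEmbedding j :=
    IsOpenEmbedding.of_continuous_injective_isOpenMap hj_cont hj_inj hj_open
  set e := hj_emb.isEmbedding.toHomeomorph with he
  have he_symm : ∀ z : Set.range j, j (e.symm z) = (z : Quotient (orbitRel G Y)) := by
    intro z
    have := e.apply_symm_apply z
    exact congrArg Subtype.val this
  -- a neighborhood of t mapping into the image of U
  have hrange : ∀ z ∈ Quotient.mk (orbitRel G Y) '' U, z ∈ Set.range j := by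
    rintro z ⟨u, hu, rfl⟩
    exact ⟨Quotient.mk (orbitRel H U) ⟨u, hu⟩, rfl⟩
  have hO : IsOpen (γ ⁻¹' (Quotient.mk (orbitRel G Y) '' U)) :=
    (isOpenMap_quotient_mk'_mul (Γ := G) U hUopen).preimage hγ
  have htO : t ∈ γ ⁻¹' (Quotient.mk (orbitRel G Y) '' U) := by
    simp only [mem_preimage, ← hy]
    exact ⟨y, hyU, rfl⟩
  obtain ⟨δ, hδpos, hδ⟩ := Metric.isOpen_iff.1 hO t htO
  rw [Real.ball_eq_Ioo] at hδ
  refine ⟨δ / 2, by linarith, ?_⟩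
  set cl : ℝ → ℝ := fun s => max (t - δ / 2) (min (t + δ / 2) s) with hcl
  have hcl_cont : Continuous cl := continuous_const.max (continuous_const.min continuous_id)
  have hcl_mem : ∀ s, cl s ∈ Ioo (t - δ) (t + δ) := by
    intro s
    constructor
    · have : t - δ / 2 ≤ cl s := le_max_left _ _
      linarith
    · have h1 : min (t + δ / 2) s ≤ t + δ / 2 := min_le_left _ _
      have : cl s ≤ t + δ / 2 := max_le (by linarith) h1
      linarith
  have hcl_eq : ∀ s ∈ Ioo (t - δ / 2) (t + δ / 2), cl s = s := by
    intro s hs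
    rw [hcl]
    simp only []
    rw [min_eq_right hs.2.le, max_eq_right hs.1.le]
  have hmemr : ∀ s, γ (cl s) ∈ Set.range j := fun s => hrange _ (hδ (hcl_mem s))
  set γ'' : ℝ → Quotient (orbitRel H U) := fun s => e.symm ⟨γ (cl s), hmemr s⟩ with hγ''
  have hγ''_cont : Continuous γ'' :=
    e.symm.continuous.comp (Continuous.subtype_mk (hγ.comp hcl_cont) _)
  -- the cardinality decreases
  have hcard : Nat.card H < Nat.card G := by
    obtain ⟨g, hg⟩ : ∃ g : G, g ∉ H := by
      by_contra hc
      push_neg at hc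
      exact hHne ((Subgroup.eq_top_iff' H).2 hc)
    have h1 : (H : Set G) ⊂ Set.univ :=
      ssubset_of_subset_not_subset (subset_univ _) (fun hsub => hg (hsub (mem_univ g)))
    calc Nat.card H = (H : Set G).ncard := Nat.card_coe_set_eq _
      _ < (Set.univ : Set G).ncard := Set.ncard_lt_ncard h1 finite_univ
      _ = Nat.card G := Set.ncard_univ G
  obtain ⟨m', hm'_cont, hm'⟩ := IH (G' := ↥H) (Y' := ↥U) hcard γ'' hγ''_cont
  refine ⟨fun s => ((m' s : U) : Y), continuous_subtype_val.comp hm'_cont, ?_⟩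
  intro s hs
  have h1 : j (Quotient.mk (orbitRel H U) (m' s)) = γ (cl s) := by
    rw [hm' s]
    exact he_symm ⟨γ (cl s), hmemr s⟩
  rw [hj_mk] at h1
  rw [h1, hcl_eq s hs]


/-- Lifting on a compact interval with prescribed starting point, given local liftability. -/
lemma lift_on_Icc (γ : ℝ → Quotient (orbitRel G Y)) {c d : ℝ} (hcd : c ≤ d)
    (hloc : ∀ t ∈ Icc c d, ∃ ε > 0, ∃ m : ℝ → Y, Continuous m ∧
      ∀ s ∈ Ioo (t - ε) (t + ε), Quotient.mk (orbitRel G Y) (m s) = γ s)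
    (y₀ : Y) (hy₀ : Quotient.mk (orbitRel G Y) y₀ = γ c) :
    ∃ ℓ : ℝ → Y, ContinuousOn ℓ (Icc c d) ∧
      (∀ s ∈ Icc c d, Quotient.mk (orbitRel G Y) (ℓ s) = γ s) ∧ ℓ c = y₀ := by
  set S : Set ℝ := {e | e ∈ Icc c d ∧ ∃ ℓ : ℝ → Y, ContinuousOn ℓ (Icc c e) ∧
    (∀ s ∈ Icc c e, Quotient.mk (orbitRel G Y) (ℓ s) = γ s) ∧ ℓ c = y₀} with hS
  have hcS : c ∈ S := by
    refine ⟨⟨le_refl c, hcd⟩, fun _ => y₀, continuousOn_const, ?_, rfl⟩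
    intro s hs
    have : s = c := le_antisymm hs.2 hs.1
    rw [this]
    exact hy₀
  have hbdd : BddAbove S := ⟨d, fun e he => he.1.2⟩
  have hne : S.Nonempty := ⟨c, hcS⟩
  set E := sSup S with hE
  have hcE : c ≤ E := le_csSup hbdd hcS
  have hEd : E ≤ d := csSup_le hne fun e he => he.1.2
  obtain ⟨ε, hε, m, hm_cont, hm⟩ := hloc E ⟨hcE, hEd⟩
  obtain ⟨e, heS, hlt⟩ := exists_lt_of_lt_csSup hne (by linarith : E - ε < E)
  have he_le : e ≤ E := le_csSup hbdd heS
  obtain ⟨⟨hce, hed⟩, ℓe, hℓe_cont, hℓe, hℓe_c⟩ := heS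
  have hγe : Quotient.mk (orbitRel G Y) (m e) = γ e := hm e ⟨by linarith, by linarith⟩
  have hπe : Quotient.mk (orbitRel G Y) (ℓe e) = γ e := hℓe e ⟨hce, le_refl e⟩
  obtain ⟨g, hg⟩ : ∃ g : G, g • m e = ℓe e := mk_eq_mk_iff.1 (hπe.trans hγe.symm)
  set e'' := min d (E + ε / 2) with he''
  have he''1 : e ≤ e'' := le_min hed (by linarith)
  have he''E : E ≤ e'' := le_min hEd (by linarith)
  have he''S : e'' ∈ S := by
    refine ⟨⟨hce.trans he''1, min_le_left _ _⟩,
      fun s => if s ≤ e then ℓe s else g • m s, ?_, ?_, ?_⟩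
    · exact glue_continuousOn hce he''1 hℓe_cont
        (((continuous_const_smul g).comp hm_cont).continuousOn) hg.symm
    · intro s hs
      by_cases hse : s ≤ e
      · simp only [if_pos hse]
        exact hℓe s ⟨hs.1, hse⟩
      · push_neg at hse
        simp only [if_neg (not_le.2 hse)]
        have h1 : Quotient.mk (orbitRel G Y) (g • m s) = Quotient.mk (orbitRel G Y) (m s) :=
          mk_eq_mk_iff.2 ⟨g, rfl⟩
        rw [h1]
        refine hm s ⟨by linarith, ?_⟩
        have : s ≤ E + ε / 2 := hs.2.trans (min_le_right _ _)
        linarith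
    · simp only [if_pos hce]
      exact hℓe_c
  have he''le : e'' ≤ E := le_csSup hbdd he''S
  have hEeq : E = d := by
    by_contra hne'
    have hEd' : E < d := lt_of_le_of_ne hEd hne'
    have : E < e'' := lt_min hEd' (by linarith)
    linarith
  have : d ∈ S := by
    have : e'' = d := by rw [he'', hEeq]; exact min_eq_left (by linarith)
    rw [← this]
    exact he''S
  exact this.2

/-- Lifting on a compact interval with prescribed ending point. -/
lemma lift_on_Icc' (γ : ℝ → Quotient (orbitRel G Y)) {c d : ℝ} (hcd : c ≤ d)
    (hloc : ∀ t ∈ Icc c d, ∃ ε > 0, ∃ m : ℝ → Y, Continuous m ∧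
      ∀ s ∈ Ioo (t - ε) (t + ε), Quotient.mk (orbitRel G Y) (m s) = γ s)
    (y₁ : Y) (hy₁ : Quotient.mk (orbitRel G Y) y₁ = γ d) :
    ∃ ℓ : ℝ → Y, ContinuousOn ℓ (Icc c d) ∧
      (∀ s ∈ Icc c d, Quotient.mk (orbitRel G Y) (ℓ s) = γ s) ∧ ℓ d = y₁ := by
  set γr : ℝ → Quotient (orbitRel G Y) := fun s => γ (c + d - s) with hγr
  have hlocr : ∀ t ∈ Icc c d, ∃ ε > 0, ∃ m : ℝ → Y, Continuous m ∧
      ∀ s ∈ Ioo (t - ε) (t + ε), Quotient.mk (orbitRel G Y) (m s) = γr s := by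
    intro t ht
    obtain ⟨ε, hε, m, hm_cont, hm⟩ := hloc (c + d - t) ⟨by linarith [ht.2], by linarith [ht.1]⟩
    refine ⟨ε, hε, fun s => m (c + d - s),
      hm_cont.comp (continuous_const.sub continuous_id), ?_⟩
    intro s hs
    exact hm (c + d - s) ⟨by simp only [mem_Ioo] at hs; linarith [hs.2],
      by simp only [mem_Ioo] at hs; linarith [hs.1]⟩
  have hy₁' : Quotient.mk (orbitRel G Y) y₁ = γr c := by
    rw [hγr]
    simp only []
    rw [show c + d - c = d by ring]
    exact hy₁
  obtain ⟨ℓr, hℓr_cont, hℓr, hℓr_c⟩ := lift_on_Icc γr hcd hlocr y₁ hy₁'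
  refine ⟨fun s => ℓr (c + d - s), ?_, ?_, ?_⟩
  · refine ContinuousOn.comp hℓr_cont
      ((continuous_const.sub continuous_id).continuousOn) ?_
    intro s hs
    exact ⟨by linarith [hs.2], by linarith [hs.1]⟩
  · intro s hs
    have := hℓr (c + d - s) ⟨by linarith [hs.2], by linarith [hs.1]⟩
    rw [hγr] at this
    simp only [] at this
    rw [show c + d - (c + d - s) = s by ring] at this
    exact this
  · simp only []
    rw [show c + d - d = c by ring]
    exact hℓr_c

/-- Extending a lift on a compact interval to a larger compact interval. -/
lemma extend_lift (γ : ℝ → Quotient (orbitRel G Y)) {a b a' b' : ℝ}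
    (hab : a ≤ b) (ha' : a' ≤ a) (hb' : b ≤ b')
    (hloc : ∀ t ∈ Icc a' b', ∃ ε > 0, ∃ m : ℝ → Y, Continuous m ∧
      ∀ s ∈ Ioo (t - ε) (t + ε), Quotient.mk (orbitRel G Y) (m s) = γ s)
    (ℓ : ℝ → Y) (hℓ_cont : ContinuousOn ℓ (Icc a b))
    (hℓ : ∀ s ∈ Icc a b, Quotient.mk (orbitRel G Y) (ℓ s) = γ s) :
    ∃ ℓ' : ℝ → Y, ContinuousOn ℓ' (Icc a' b') ∧
      (∀ s ∈ Icc a' b', Quotient.mk (orbitRel G Y) (ℓ' s) = γ s) ∧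
      ∀ s ∈ Icc a b, ℓ' s = ℓ s := by
  have hsub1 : Icc a' a ⊆ Icc a' b' := Icc_subset_Icc (le_refl _) (hab.trans hb')
  have hsub2 : Icc b b' ⊆ Icc a' b' := Icc_subset_Icc (ha'.trans hab) (le_refl _)
  obtain ⟨u, hu_cont, hu, hu_a⟩ := lift_on_Icc' γ ha'
    (fun t ht => hloc t (hsub1 ht)) (ℓ a) (hℓ a ⟨le_refl a, hab⟩)
  obtain ⟨v, hv_cont, hv, hv_b⟩ := lift_on_Icc γ hb'
    (fun t ht => hloc t (hsub2 ht)) (ℓ b) (hℓ b ⟨hab, le_refl b⟩)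
  set w : ℝ → Y := fun s => if s ≤ b then ℓ s else v s with hw
  have hw_cont : ContinuousOn w (Icc a b') := glue_continuousOn hab hb' hℓ_cont hv_cont hv_b.symm
  set ℓ' : ℝ → Y := fun s => if s ≤ a then u s else w s with hℓ'
  have hw_a : w a = ℓ a := by rw [hw]; simp only [if_pos hab]
  refine ⟨ℓ', glue_continuousOn ha' (hab.trans hb') hu_cont hw_cont (hu_a.trans hw_a.symm),
    ?_, ?_⟩
  · intro s hs
    by_cases hsa : s ≤ a
    · simp only [hℓ', if_pos hsa]
      exact hu s ⟨hs.1, hsa⟩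
    · push_neg at hsa
      simp only [hℓ', if_neg (not_le.2 hsa)]
      by_cases hsb : s ≤ b
      · simp only [hw, if_pos hsb]
        exact hℓ s ⟨hsa.le, hsb⟩
      · push_neg at hsb
        simp only [hw, if_neg (not_le.2 hsb)]
        exact hv s ⟨hsb.le, hs.2⟩
  · intro s hs
    by_cases hsa : s ≤ a
    · have hsa' : s = a := le_antisymm hsa hs.1
      rw [hsa']
      simp only [hℓ', if_pos (le_refl a)]
      exact hu_a
    · simp only [hℓ', if_neg hsa, hw, if_pos hs.2]


/-- Lifting on an open ord-connected subset of `ℝ`, given local liftability on it. -/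
lemma lift_on_component (γ : ℝ → Quotient (orbitRel G Y)) (K : Set ℝ) (hK : K.OrdConnected)
    (hloc : ∀ t ∈ K, ∃ ε > 0, Ioo (t - ε) (t + ε) ⊆ K ∧ ∃ m : ℝ → Y, Continuous m ∧
      ∀ s ∈ Ioo (t - ε) (t + ε), Quotient.mk (orbitRel G Y) (m s) = γ s)
    (t₀ : ℝ) (ht₀ : t₀ ∈ K) :
    ∃ ℓ : ℝ → Y, (∀ s ∈ K, ContinuousAt ℓ s) ∧
      ∀ s ∈ K, Quotient.mk (orbitRel G Y) (ℓ s) = γ s := by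
  classical
  have hIcc : ∀ a b : ℝ, a ∈ K → b ∈ K → Icc a b ⊆ K := fun a b ha hb => hK.out ha hb
  have hloc' : ∀ a b : ℝ, a ∈ K → b ∈ K → ∀ t ∈ Icc a b, ∃ ε > 0, ∃ m : ℝ → Y, Continuous m ∧
      ∀ s ∈ Ioo (t - ε) (t + ε), Quotient.mk (orbitRel G Y) (m s) = γ s := by
    intro a b ha hb t ht
    obtain ⟨ε, hε, _, hm⟩ := hloc t (hIcc a b ha hb ht)
    exact ⟨ε, hε, hm⟩
  obtain ⟨useq, hdense⟩ := TopologicalSpace.exists_dense_seq ℝ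
  set Fc : ℕ → Finset ℝ := fun n =>
    insert t₀ (((Finset.range (n+1)).image useq).filter (fun x => x ∈ K ∧ x ≤ t₀)) with hFc
  set Fd : ℕ → Finset ℝ := fun n =>
    insert t₀ (((Finset.range (n+1)).image useq).filter (fun x => x ∈ K ∧ t₀ ≤ x)) with hFd
  have hFc_ne : ∀ n, (Fc n).Nonempty := fun n => ⟨t₀, Finset.mem_insert_self _ _⟩
  have hFd_ne : ∀ n, (Fd n).Nonempty := fun n => ⟨t₀, Finset.mem_insert_self _ _⟩
  set c : ℕ → ℝ := fun n => (Fc n).min' (hFc_ne n) with hc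
  set d : ℕ → ℝ := fun n => (Fd n).max' (hFd_ne n) with hd
  have hFc_mem : ∀ n x, x ∈ Fc n → x ∈ K ∧ x ≤ t₀ := by
    intro n x hx
    rcases Finset.mem_insert.1 hx with rfl | h
    · exact ⟨ht₀, le_refl _⟩
    · exact (Finset.mem_filter.1 h).2
  have hFd_mem : ∀ n x, x ∈ Fd n → x ∈ K ∧ t₀ ≤ x := by
    intro n x hx
    rcases Finset.mem_insert.1 hx with rfl | h
    · exact ⟨ht₀, le_refl _⟩
    · exact (Finset.mem_filter.1 h).2
  have hc_mem : ∀ n, c n ∈ K ∧ c n ≤ t₀ := fun n => hFc_mem n _ (Finset.min'_mem _ _)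
  have hd_mem : ∀ n, d n ∈ K ∧ t₀ ≤ d n := fun n => hFd_mem n _ (Finset.max'_mem _ _)
  have hcd : ∀ n, c n ≤ d n := fun n => (hc_mem n).2.trans (hd_mem n).2
  have hFc_sub : ∀ n, Fc n ⊆ Fc (n+1) := by
    intro n
    exact Finset.insert_subset_insert _ (Finset.filter_subset_filter _
      (Finset.image_subset_image (Finset.range_subset_range.2 (by omega))))
  have hFd_sub : ∀ n, Fd n ⊆ Fd (n+1) := by
    intro n
    exact Finset.insert_subset_insert _ (Finset.filter_subset_filter _
      (Finset.image_subset_image (Finset.range_subset_range.2 (by omega))))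
  have hc_anti : Antitone c := antitone_nat_of_succ_le fun n =>
    Finset.min'_le _ _ (hFc_sub n (Finset.min'_mem _ _))
  have hd_mono : Monotone d := monotone_nat_of_le_succ fun n =>
    Finset.le_max' _ _ (hFd_sub n (Finset.max'_mem _ _))
  -- coverage
  have hcov_c : ∀ z ∈ K, ∃ n, c n ≤ z := by
    intro z hz
    rcases le_total t₀ z with h | h
    · exact ⟨0, (hc_mem 0).2.trans h⟩
    · obtain ⟨ε, hε, hIooK, -⟩ := hloc z hz
      obtain ⟨k, hk⟩ := hdense.exists_mem_open isOpen_Ioo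
        (nonempty_Ioo.2 (by linarith : z - ε < z))
      have hkK : useq k ∈ K := hIooK ⟨hk.1, by linarith [hk.2]⟩
      have hkz : useq k ≤ z := hk.2.le
      refine ⟨k, le_trans (Finset.min'_le _ (useq k) ?_) hkz⟩
      refine Finset.mem_insert_of_mem (Finset.mem_filter.2 ⟨?_, hkK, hkz.trans h⟩)
      exact Finset.mem_image_of_mem useq (Finset.mem_range.2 (Nat.lt_succ_self k))
  have hcov_d : ∀ z ∈ K, ∃ n, z ≤ d n := by
    intro z hz
    rcases le_total z t₀ with h | h
    · exact ⟨0, h.trans (hd_mem 0).2⟩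
    · obtain ⟨ε, hε, hIooK, -⟩ := hloc z hz
      obtain ⟨k, hk⟩ := hdense.exists_mem_open isOpen_Ioo
        (nonempty_Ioo.2 (by linarith : z < z + ε))
      have hkK : useq k ∈ K := hIooK ⟨by linarith [hk.1], hk.2⟩
      have hkz : z ≤ useq k := hk.1.le
      refine ⟨k, le_trans hkz (Finset.le_max' _ (useq k) ?_)⟩
      refine Finset.mem_insert_of_mem (Finset.mem_filter.2 ⟨?_, hkK, h.trans hkz⟩)
      exact Finset.mem_image_of_mem useq (Finset.mem_range.2 (Nat.lt_succ_self k))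
  -- base lift
  obtain ⟨y₀, hy₀⟩ := Quotient.exists_rep (γ (c 0))
  obtain ⟨ℓ₀, hℓ₀_cont, hℓ₀, -⟩ := lift_on_Icc γ (hcd 0)
    (hloc' (c 0) (d 0) (hc_mem 0).1 (hd_mem 0).1) y₀ hy₀
  -- recursive extension
  have hstep : ∀ n (ℓp : ℝ → Y), ContinuousOn ℓp (Icc (c n) (d n)) →
      (∀ s ∈ Icc (c n) (d n), Quotient.mk (orbitRel G Y) (ℓp s) = γ s) →
      ∃ ℓ' : ℝ → Y, (ContinuousOn ℓ' (Icc (c (n+1)) (d (n+1))) ∧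
        ∀ s ∈ Icc (c (n+1)) (d (n+1)), Quotient.mk (orbitRel G Y) (ℓ' s) = γ s) ∧
        ∀ s ∈ Icc (c n) (d n), ℓ' s = ℓp s := by
    intro n ℓp h1 h2
    obtain ⟨ℓ', hh1, hh2, hh3⟩ := extend_lift γ (hcd n)
      (hc_anti (by omega : n ≤ n+1)) (hd_mono (by omega : n ≤ n+1))
      (hloc' (c (n+1)) (d (n+1)) (hc_mem (n+1)).1 (hd_mem (n+1)).1) ℓp h1 h2
    exact ⟨ℓ', ⟨hh1, hh2⟩, hh3⟩
  choose step hstep1 hstep2 using hstep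
  set T : ℕ → Type _ := fun n => {ℓp : ℝ → Y // ContinuousOn ℓp (Icc (c n) (d n)) ∧
    ∀ s ∈ Icc (c n) (d n), Quotient.mk (orbitRel G Y) (ℓp s) = γ s} with hT
  let L : ∀ n : ℕ, T n := fun n => Nat.rec (⟨ℓ₀, hℓ₀_cont, hℓ₀⟩ : T 0)
    (fun k p => ⟨step k p.1 p.2.1 p.2.2, hstep1 k p.1 p.2.1 p.2.2⟩) n
  have hLsucc : ∀ n, ∀ s ∈ Icc (c n) (d n), (L (n+1)).1 s = (L n).1 s :=
    fun n => hstep2 n (L n).1 (L n).2.1 (L n).2.2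
  have hIccmono : ∀ n m : ℕ, n ≤ m → Icc (c n) (d n) ⊆ Icc (c m) (d m) :=
    fun n m h => Icc_subset_Icc (hc_anti h) (hd_mono h)
  have hagree : ∀ n m : ℕ, n ≤ m → ∀ s ∈ Icc (c n) (d n), (L m).1 s = (L n).1 s := by
    intro n m hnm
    induction m, hnm using Nat.le_induction with
    | base => intro s _; rfl
    | succ m hnm ih =>
      intro s hs
      rw [hLsucc m s (hIccmono n m hnm hs)]
      exact ih s hs
  set ℓ : ℝ → Y := fun s =>
    if h : ∃ n, s ∈ Icc (c n) (d n) then (L (Nat.find h)).1 s else (L 0).1 s with hℓdef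
  have hℓeq : ∀ n, ∀ s ∈ Icc (c n) (d n), ℓ s = (L n).1 s := by
    intro n s hs
    have h : ∃ m, s ∈ Icc (c m) (d m) := ⟨n, hs⟩
    rw [hℓdef]
    simp only [dif_pos h]
    exact (hagree (Nat.find h) n (Nat.find_min' h hs) s (Nat.find_spec h)).symm
  have hcov : ∀ z ∈ K, ∃ n, z ∈ Icc (c n) (d n) := by
    intro z hz
    obtain ⟨n₁, h₁⟩ := hcov_c z hz
    obtain ⟨n₂, h₂⟩ := hcov_d z hz
    exact ⟨max n₁ n₂, ⟨(hc_anti (le_max_left n₁ n₂)).trans h₁,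
      h₂.trans (hd_mono (le_max_right n₁ n₂))⟩⟩
  refine ⟨ℓ, ?_, ?_⟩
  · intro s hs
    obtain ⟨ε, hε, hIooK, -⟩ := hloc s hs
    obtain ⟨n₁, h₁⟩ := hcov_c (s - ε/2) (hIooK ⟨by linarith, by linarith⟩)
    obtain ⟨n₂, h₂⟩ := hcov_d (s + ε/2) (hIooK ⟨by linarith, by linarith⟩)
    set n := max n₁ n₂ with hn
    have hcs : c n < s := lt_of_le_of_lt ((hc_anti (le_max_left n₁ n₂)).trans h₁) (by linarith)
    have hsd : s < d n := lt_of_lt_of_le (by linarith : s < s + ε/2)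
      (h₂.trans (hd_mono (le_max_right n₁ n₂)))
    have hCA : ContinuousAt (L n).1 s :=
      (L n).2.1.continuousAt (Icc_mem_nhds hcs hsd)
    refine hCA.congr ?_
    have : Ioo (c n) (d n) ∈ nhds s := Ioo_mem_nhds hcs hsd
    refine Filter.eventuallyEq_of_mem this fun s' hs' => ?_
    exact (hℓeq n s' (Ioo_subset_Icc_self hs')).symm
  · intro s hs
    obtain ⟨n, hn⟩ := hcov s hs
    rw [hℓeq n s hn]
    exact (L n).2.2 s hn


/-- The global path-lifting theorem for finite group actions, by induction on the order of the
group. -/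
theorem lift_global : ∀ (n : ℕ) {G : Type u} [Group G] [Finite G] {Y : Type v}
    [TopologicalSpace Y] [T2Space Y] [MulAction G Y] [ContinuousConstSMul G Y],
    Nat.card G ≤ n → ∀ (γ : ℝ → Quotient (orbitRel G Y)), Continuous γ →
    ∃ ℓ : ℝ → Y, Continuous ℓ ∧ ∀ t, Quotient.mk (orbitRel G Y) (ℓ t) = γ t := by
  intro n
  induction n with
  | zero =>
    intro G _ _ Y _ _ _ _ hn γ hγ
    have : 0 < Nat.card G := Nat.card_pos
    omega
  | succ n ih =>
    intro G _ _ Y _ _ _ _ hn γ hγ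
    classical
    -- the induction hypothesis in the form needed by `local_lift`
    have IH : ∀ {G' : Type u} [Group G'] [Finite G'] {Y' : Type v} [TopologicalSpace Y']
        [T2Space Y'] [MulAction G' Y'] [ContinuousConstSMul G' Y'],
        Nat.card G' < Nat.card G →
        ∀ γ' : ℝ → Quotient (orbitRel G' Y'), Continuous γ' →
        ∃ ℓ : ℝ → Y', Continuous ℓ ∧ ∀ t, Quotient.mk (orbitRel G' Y') (ℓ t) = γ' t := by
      intro G' _ _ Y' _ _ _ _ hlt γ' hγ'
      exact ih (by omega) γ' hγ'
    obtain ⟨ynull, -⟩ := Quotient.exists_rep (γ 0)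
    haveI : Nonempty Y := ⟨ynull⟩
    set Fix : Set Y := {y : Y | ∀ g : G, g • y = y} with hFix
    have hFixClosed : IsClosed Fix := by
      have : Fix = ⋂ g : G, {y : Y | g • y = y} := by
        ext y; simp [hFix, mem_iInter]
      rw [this]
      exact isClosed_iInter fun g => isClosed_eq (continuous_const_smul g) continuous_id
    set C : Set ℝ := γ ⁻¹' (Quotient.mk (orbitRel G Y) '' Fix) with hC
    have hCclosed : IsClosed C := (isClosedMap_mk Fix hFixClosed).preimage hγ
    -- the forced values over C
    have hforced : ∀ t, t ∈ C → ∃ zz : Y, (∀ g : G, g • zz = zz) ∧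
        Quotient.mk (orbitRel G Y) zz = γ t := by
      intro t ht
      obtain ⟨zz, hzz, hzz'⟩ := ht
      exact ⟨zz, hzz, hzz'⟩
    choose zfun hzfix hzγ using hforced
    have huniq : ∀ t (ht : t ∈ C), ∀ w : Y,
        Quotient.mk (orbitRel G Y) w = γ t → w = zfun t ht := by
      intro t ht w hw
      obtain ⟨g, hg⟩ := mk_eq_mk_iff.1 (hw.trans (hzγ t ht).symm)
      rw [← hg, hzfix t ht g]
    -- local lifting off C
    have hLOC : ∀ t, t ∉ C → ∃ ε > 0, ∃ m : ℝ → Y, Continuous m ∧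
        ∀ s ∈ Ioo (t - ε) (t + ε), Quotient.mk (orbitRel G Y) (m s) = γ s := by
      intro t ht
      exact local_lift IH γ hγ t ht
    -- each component of Cᶜ is open and locally liftable
    have hcomploc : ∀ t, t ∉ C → ∀ s ∈ ordConnectedComponent Cᶜ t,
        ∃ ε > 0, Ioo (s - ε) (s + ε) ⊆ ordConnectedComponent Cᶜ t ∧
        ∃ m : ℝ → Y, Continuous m ∧
        ∀ s' ∈ Ioo (s - ε) (s + ε), Quotient.mk (orbitRel G Y) (m s') = γ s' := by
      intro t ht s hs
      have hsC : s ∉ C := ordConnectedComponent_subset hs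
      obtain ⟨ε₁, hε₁, m, hm_cont, hm⟩ := hLOC s hsC
      obtain ⟨ε₂, hε₂, hball⟩ := Metric.isOpen_iff.1 hCclosed.isOpen_compl s hsC
      rw [Real.ball_eq_Ioo] at hball
      refine ⟨min ε₁ ε₂, lt_min hε₁ hε₂, ?_, m, hm_cont, ?_⟩
      · intro s' hs'
        have hs'2 : s' ∈ Ioo (s - ε₂) (s + ε₂) := by
          rcases hs' with ⟨h1, h2⟩
          constructor <;> [nlinarith [min_le_right ε₁ ε₂]; nlinarith [min_le_right ε₁ ε₂]]
        rw [mem_ordConnectedComponent]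
        refine (uIcc_subset_uIcc_union_uIcc (b := s)).trans (union_subset ?_ ?_)
        · exact mem_ordConnectedComponent.1 hs
        · refine (ordConnected_Ioo.uIcc_subset ?_ hs'2).trans hball
          exact ⟨by linarith, by linarith⟩
      · intro s' hs'
        refine hm s' ?_
        rcases hs' with ⟨h1, h2⟩
        constructor <;> nlinarith [min_le_left ε₁ ε₂]
    -- choose a lift on each component
    set P : Set ℝ → (ℝ → Y) → Prop := fun K ℓ =>
      (∀ s ∈ K, ContinuousAt ℓ s) ∧ ∀ s ∈ K, Quotient.mk (orbitRel G Y) (ℓ s) = γ s with hP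
    set F : Set ℝ → (ℝ → Y) := fun K =>
      if h : ∃ ℓ, P K ℓ then h.choose else fun _ => Classical.arbitrary Y with hF
    have hFspec : ∀ K, (∃ ℓ, P K ℓ) → P K (F K) := by
      intro K h
      rw [hF]
      simp only [dif_pos h]
      exact h.choose_spec
    have hFex : ∀ t, t ∉ C → ∃ ℓ, P (ordConnectedComponent Cᶜ t) ℓ := by
      intro t ht
      exact lift_on_component γ _ inferInstance (hcomploc t ht) t
        (self_mem_ordConnectedComponent.2 ht)
    set ℓ : ℝ → Y := fun t =>
      if ht : t ∈ C then zfun t ht else F (ordConnectedComponent Cᶜ t) t with hℓ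
    have hlift : ∀ t, Quotient.mk (orbitRel G Y) (ℓ t) = γ t := by
      intro t
      by_cases ht : t ∈ C
      · rw [hℓ]; simp only [dif_pos ht]; exact hzγ t ht
      · rw [hℓ]; simp only [dif_neg ht]
        exact (hFspec _ (hFex t ht)).2 t (self_mem_ordConnectedComponent.2 ht)
    refine ⟨ℓ, ?_, hlift⟩
    rw [continuous_iff_continuousAt]
    intro t
    by_cases ht : t ∈ C
    · -- continuity at points of C via the closed-map property
      have hℓt : ℓ t = zfun t ht := by rw [hℓ]; simp only [dif_pos ht]
      rw [ContinuousAt, hℓt, tendsto_nhds]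
      intro V hVopen hVmem
      have hfib : Quotient.mk (orbitRel G Y) ⁻¹' {γ t} ⊆ V := by
        intro w hw
        rw [mem_preimage, mem_singleton_iff] at hw
        rw [huniq t ht w hw]
        exact hVmem
      obtain ⟨W, hWopen, hWmem, hWsub⟩ := exists_open_of_closedMap isClosedMap_mk hVopen hfib
      have : γ ⁻¹' W ∈ nhds t := (hWopen.preimage hγ).mem_nhds hWmem
      refine Filter.mem_of_superset this ?_
      intro s hsW
      have : Quotient.mk (orbitRel G Y) (ℓ s) ∈ W := by rw [hlift s]; exact hsW
      exact hWsub this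
    · -- continuity off C
      have hKopen : IsOpen (ordConnectedComponent Cᶜ t) := by
        rw [isOpen_iff_mem_nhds]
        intro s hs
        obtain ⟨ε, hε, hsub, -⟩ := hcomploc t ht s hs
        exact Filter.mem_of_superset (Ioo_mem_nhds (by linarith) (by linarith)) hsub
      have hmemK : t ∈ ordConnectedComponent Cᶜ t := self_mem_ordConnectedComponent.2 ht
      have hCA : ContinuousAt (F (ordConnectedComponent Cᶜ t)) t :=
        (hFspec _ (hFex t ht)).1 t hmemK
      refine hCA.congr ?_
      refine Filter.eventuallyEq_of_mem (hKopen.mem_nhds hmemK) ?_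
      intro s hs
      have hsC : s ∉ C := ordConnectedComponent_subset hs
      have hcomp_eq : ordConnectedComponent Cᶜ s = ordConnectedComponent Cᶜ t :=
        (ordConnectedComponent_eq (mem_ordConnectedComponent.1 hs)).symm
      rw [hℓ]
      simp only [dif_neg hsC]
      rw [hcomp_eq]

/-- Global path lifting with prescribed initial point. -/
theorem lift_global_start {G : Type u} [Group G] [Finite G] {Y : Type v}
    [TopologicalSpace Y] [T2Space Y] [MulAction G Y] [ContinuousConstSMul G Y]
    (γ : ℝ → Quotient (orbitRel G Y)) (hγ : Continuous γ)
    (y₀ : Y) (hy₀ : Quotient.mk (orbitRel G Y) y₀ = γ 0) :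
    ∃ ℓ : ℝ → Y, Continuous ℓ ∧ (∀ t, Quotient.mk (orbitRel G Y) (ℓ t) = γ t) ∧ ℓ 0 = y₀ := by
  obtain ⟨ℓ, hℓ_cont, hℓ⟩ := lift_global (Nat.card G) le_rfl γ hγ
  obtain ⟨g, hg⟩ : ∃ g : G, g • ℓ 0 = y₀ := mk_eq_mk_iff.1 (hy₀.trans (hℓ 0).symm)
  refine ⟨fun t => g • ℓ t, (continuous_const_smul g).comp hℓ_cont, ?_, hg⟩
  intro t
  rw [← hℓ t]
  exact mk_eq_mk_iff.2 ⟨g, rfl⟩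


end GPL

end

attribute [local instance] Path.Homotopic.setoid

/-- If a finite group `G` acts by homeomorphisms on a compact metrizable space `X` with
fixed point `x₀`, then the quotient map `q : X → X/G` induces a surjection
`π₁(X, x₀) → π₁(X/G, q(x₀))` on fundamental groups. -/
theorem fundamentalGroup_map_surjective_of_fixedPoint
    {G : Type*} [Group G] [Finite G]
    {X : Type*} [TopologicalSpace X] [CompactSpace X] [TopologicalSpace.MetrizableSpace X]
    [MulAction G X] [ContinuousConstSMul G X]
    (x₀ : X) (hx₀ : ∀ g : G, g • x₀ = x₀)
    (q : C(X, Quotient (MulAction.orbitRel G X)))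
    (hq : ∀ x : X, q x = Quotient.mk (MulAction.orbitRel G X) x) :
    Function.Surjective
      ((Functor.mapAut (FundamentalGroupoid.mk x₀)
          (πₘ (show TopCat.of X ⟶ TopCat.of (Quotient (MulAction.orbitRel G X)) from TopCat.ofHom q))) :
        Aut (FundamentalGroupoid.mk x₀) →*
          Aut (FundamentalGroupoid.mk (q x₀))) := by
  intro b
  obtain ⟨p, hp⟩ : ∃ p : Path (q x₀) (q x₀), ⟦p⟧ = b.hom := Quotient.exists_rep b.hom
  -- extend the representative loop to a map on ℝ and lift it
  have hy₀ : Quotient.mk (MulAction.orbitRel G X) x₀ = p.extend 0 := by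
    rw [Path.extend_zero, ← hq x₀]
  obtain ⟨ℓ, hℓ_cont, hℓ, hℓ0⟩ :=
    GPL.lift_global_start p.extend p.continuous_extend x₀ hy₀
  have hℓ1 : ℓ 1 = x₀ := by
    have h1 : Quotient.mk (MulAction.orbitRel G X) (ℓ 1) =
        Quotient.mk (MulAction.orbitRel G X) x₀ := by
      rw [hℓ 1, Path.extend_one, ← hq x₀]
    obtain ⟨g, hg⟩ := GPL.mk_eq_mk_iff.1 h1
    rw [← hg, hx₀ g]
  set ℓpath : Path x₀ x₀ :=
    { toFun := fun t => ℓ t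
      continuous_toFun := hℓ_cont.comp continuous_subtype_val
      source' := by simpa using hℓ0
      target' := by simpa using hℓ1 } with hℓpath
  have hmap : ℓpath.map q.continuous = p := by
    apply Path.ext
    funext t
    have h1 : (ℓpath.map q.continuous) t = q (ℓ t) := rfl
    rw [h1, hq (ℓ ↑t), hℓ ↑t, Path.extend_extends']
  refine ⟨(Groupoid.isoEquivHom _ _).symm (FundamentalGroup.fromPath (X := TopCat.of X) (x := x₀) (⟦ℓpath⟧ : Path.Homotopic.Quotient x₀ x₀)), ?_⟩
  apply CategoryTheory.Iso.ext
  rw [← hp]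
  show (πₘ (show TopCat.of X ⟶ TopCat.of (Quotient (MulAction.orbitRel G X)) from TopCat.ofHom q)).map
    ⟦ℓpath⟧ = ⟦p⟧
  show Path.Homotopic.Quotient.map (Path.Homotopic.Quotient.mk ℓpath) q = Path.Homotopic.Quotient.mk p
  rw [← Path.Homotopic.Quotient.mk_map, hmap]
end

section
/- Let p be a prime number, let n be a positive integer, and let M be an n×n matrix with complex entries all of which are algebraic integers. Then trace(M^p) − (trace M)^p = p·z for some complex number z that is an algebraic integer. -/
open Polynomial Matrix

section CharPLemmas

variable {R : Type*} [CommRing R] (p : ℕ) [hp : Fact p.Prime] [CharP R p]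
variable {n : Type*} [Fintype n] [DecidableEq n]

/-- Over a commutative ring of prime characteristic `p`, expanding the characteristic
polynomial of `M ^ p` by `p` gives the `p`-th power of the characteristic polynomial of `M`. -/
theorem expand_charpoly_pow (M : Matrix n n R) :
    Polynomial.expand R p (Matrix.charpoly (M ^ p)) = (Matrix.charpoly M) ^ p := by
  cases isEmpty_or_nonempty n
  · have h1 : Matrix.charpoly (M ^ p) = 1 := Matrix.det_eq_one_of_card_eq_zero (by simp)
    have h2 : Matrix.charpoly M = 1 := Matrix.det_eq_one_of_card_eq_zero (by simp)
    simp [h1, h2]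
  haveI : CharP (Matrix n n R[X]) p := Matrix.charP p
  have key : (charmatrix (M ^ p)).map ⇑(Polynomial.expand R p) = (charmatrix M) ^ p := by
    have hcomm : Commute (Matrix.scalar n (X : R[X])) ((C : R →+* R[X]).mapMatrix M) :=
      Matrix.scalar_commute _ (fun r' => Commute.all _ _) _
    rw [charmatrix, charmatrix, sub_pow_char_of_commute p hcomm]
    have hs : (Matrix.scalar n (X : R[X])) ^ p = Matrix.scalar n ((X : R[X]) ^ p) :=
      (map_pow (Matrix.scalar n : R[X] →+* Matrix n n R[X]) X p).symm
    have hc : ((C : R →+* R[X]).mapMatrix M) ^ p = (C : R →+* R[X]).mapMatrix (M ^ p) :=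
      (map_pow ((C : R →+* R[X]).mapMatrix) _ _).symm
    rw [hs, hc]
    ext i j
    by_cases hij : i = j <;>
      simp [Matrix.scalar, Matrix.map_apply, Matrix.sub_apply, Matrix.diagonal, hij]
  calc Polynomial.expand R p (Matrix.charpoly (M ^ p))
      = ((charmatrix (M ^ p)).map ⇑(Polynomial.expand R p)).det := by
        rw [Matrix.charpoly]
        exact RingHom.map_det ((Polynomial.expand R p : R[X] →ₐ[R] R[X]) : R[X] →+* R[X])
          (charmatrix (M ^ p))
    _ = ((charmatrix M) ^ p).det := by rw [key]
    _ = (Matrix.charpoly M) ^ p := Matrix.det_pow _ _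

/-- Over a commutative ring of prime characteristic `p`,
`trace (M ^ p) = (trace M) ^ p`. -/
theorem trace_pow_char_eq (M : Matrix n n R) [Nonempty n] :
    Matrix.trace (M ^ p) = (Matrix.trace M) ^ p := by
  haveI : ExpChar R p := ExpChar.prime hp.out
  rw [Matrix.trace_eq_neg_charpoly_coeff, Matrix.trace_eq_neg_charpoly_coeff]
  have hcoeff : (Matrix.charpoly (M ^ p)).coeff (Fintype.card n - 1)
      = ((Matrix.charpoly M).coeff (Fintype.card n - 1)) ^ p := by
    have h1 : (Polynomial.expand R p (Matrix.charpoly (M ^ p))).coeff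
        (p * (Fintype.card n - 1)) = (Matrix.charpoly (M ^ p)).coeff (Fintype.card n - 1) :=
      Polynomial.coeff_expand_mul' hp.out.pos _ _
    have h2 : ((Matrix.charpoly M) ^ p).coeff (p * (Fintype.card n - 1))
        = ((Matrix.charpoly M).coeff (Fintype.card n - 1)) ^ p := by
      rw [← Polynomial.map_frobenius_expand p (Matrix.charpoly M), Polynomial.coeff_map,
        Polynomial.coeff_expand_mul' hp.out.pos, frobenius_def]
    rw [← h1, expand_charpoly_pow p M, h2]
  rw [hcoeff]
  exact ((frobenius R p).map_neg _).symm

end CharPLemmas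

/-- Trace commutes with entrywise application of a ring hom. -/
theorem trace_map_ringHom {F R S : Type*} [CommRing R] [CommRing S] {m : ℕ}
    [FunLike F R S] [RingHomClass F R S]
    (f : F) (A : Matrix (Fin m) (Fin m) R) :
    Matrix.trace (A.map ⇑f) = f (Matrix.trace A) := by
  simp [Matrix.trace, Matrix.map_apply]

set_option maxHeartbeats 1000000 in
/-- For a prime `p` and an `n × n` complex matrix `M` whose entries are all algebraic
integers, `trace(M^p) − (trace M)^p` is `p` times an algebraic integer. -/
theorem trace_pow_prime_sub_trace_pow_eq_prime_mul_algebraic_integer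
    (p : ℕ) (hp : p.Prime) (n : ℕ) (hn : 0 < n)
    (M : Matrix (Fin n) (Fin n) ℂ) (hM : ∀ i j, IsIntegral ℤ (M i j)) :
    ∃ z : ℂ, IsIntegral ℤ z ∧
      Matrix.trace (M ^ p) - (Matrix.trace M) ^ p = (p : ℂ) * z := by
  haveI : Fact p.Prime := ⟨hp⟩
  haveI : Nonempty (Fin n) := ⟨⟨0, hn⟩⟩
  set R := integralClosure ℤ ℂ
  -- lift M to a matrix over R
  set N : Matrix (Fin n) (Fin n) R := fun i j => ⟨M i j, hM i j⟩ with hN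
  have hval : ∀ A : Matrix (Fin n) (Fin n) R,
      Matrix.trace (A.map (fun x : R => (x : ℂ))) = ((Matrix.trace A : R) : ℂ) := by
    intro A
    simp [Matrix.trace, Matrix.map_apply]
  have hmapN : N.map (fun x : R => (x : ℂ)) = M := by
    ext i j; rfl
  have hmap_pow : (N ^ p).map (fun x : R => (x : ℂ)) = M ^ p := by
    have : (N ^ p).map (fun x : R => (x : ℂ))
        = (N.map (fun x : R => (x : ℂ))) ^ p := by
      exact (map_pow ((algebraMap R ℂ).mapMatrix) N p)
    rw [this, hmapN]
  -- the generic matrix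
  set XM : Matrix (Fin n) (Fin n) (MvPolynomial (Fin n × Fin n) ℤ) :=
    fun i j => MvPolynomial.X (i, j) with hXM
  set d : MvPolynomial (Fin n × Fin n) ℤ :=
    Matrix.trace (XM ^ p) - (Matrix.trace XM) ^ p with hd
  -- reduce mod p
  set φ : MvPolynomial (Fin n × Fin n) ℤ →+* MvPolynomial (Fin n × Fin n) (ZMod p) :=
    MvPolynomial.map (Int.castRingHom (ZMod p)) with hφ
  have hφd : φ d = 0 := by
    rw [hd, map_sub, map_pow, ← trace_map_ringHom φ, ← trace_map_ringHom φ]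
    rw [show (XM ^ p).map ⇑φ = (XM.map ⇑φ) ^ p from by
      simpa using (map_pow (φ.mapMatrix) XM p)]
    rw [trace_pow_char_eq p (XM.map ⇑φ), sub_self]
  -- hence d = p * e for some integer polynomial e
  have hker : d ∈ Ideal.span ({MvPolynomial.C (p : ℤ)} :
      Set (MvPolynomial (Fin n × Fin n) ℤ)) := by
    have h1 : d ∈ RingHom.ker φ := hφd
    rw [hφ, MvPolynomial.ker_map, ZMod.ker_intCastRingHom, Ideal.map_span,
      Set.image_singleton] at h1
    exact h1
  rw [Ideal.mem_span_singleton'] at hker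
  obtain ⟨e, he⟩ := hker
  -- evaluate at the entries of M inside the ring of algebraic integers
  set ψ : MvPolynomial (Fin n × Fin n) ℤ →ₐ[ℤ] R :=
    MvPolynomial.aeval (fun ij : Fin n × Fin n => (⟨M ij.1 ij.2, hM ij.1 ij.2⟩ : R)) with hψ
  have hψX : XM.map ⇑ψ = N := by
    ext i j
    rw [Matrix.map_apply]
    simp [hXM, hN, hψ]
  have hψd : ψ d = Matrix.trace (N ^ p) - (Matrix.trace N) ^ p := by
    rw [hd, map_sub, map_pow, ← trace_map_ringHom ψ, ← trace_map_ringHom ψ]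
    rw [show (XM ^ p).map ⇑ψ = (XM.map ⇑ψ) ^ p from by
      simpa using (map_pow (AlgHom.mapMatrix ψ) XM p)]
    rw [hψX]
  have hψC : ψ (MvPolynomial.C (p : ℤ)) = (p : R) := by
    simp [hψ]
  have hz : Matrix.trace (N ^ p) - (Matrix.trace N) ^ p = (p : R) * ψ e := by
    rw [← hψd, ← he, _root_.map_mul, hψC]; ring
  refine ⟨((ψ e : R) : ℂ), (ψ e).2, ?_⟩
  have := congrArg (fun x : R => (x : ℂ)) hz
  have hlhs : ((Matrix.trace (N ^ p) - (Matrix.trace N) ^ p : R) : ℂ)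
      = Matrix.trace (M ^ p) - (Matrix.trace M) ^ p := by
    push_cast
    rw [← hval, ← hval, hmapN, hmap_pow]
  have hrhs : (((p : R) * ψ e : R) : ℂ) = (p : ℂ) * ((ψ e : R) : ℂ) := by
    push_cast; ring
  rw [hlhs, hrhs] at this
  exact this
end

section
/- Let p be an odd prime and let A ∈ ℂ be a primitive 2p-th root of unity. Then (Σ_{m=1}^{2p} (−1)^m A^{m²})² = (−1)^{(p−1)/2} · 4p. -/
open Finset AddChar

/-- Sum of a `p`-periodic function over `Icc 1 p` equals its sum over `ZMod p`. -/
lemma sum_Icc_eq_sum_zmod {p : ℕ} [NeZero p] (hp : 0 < p) (g : ℕ → ℂ)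
    (hg : Function.Periodic g p) :
    ∑ m ∈ Finset.Icc 1 p, g m = ∑ x : ZMod p, g x.val := by
  refine Finset.sum_nbij' (fun m => (m : ZMod p))
      (fun x => if x = 0 then p else x.val) ?_ ?_ ?_ ?_ ?_
  · intro a _; exact Finset.mem_univ _
  · intro x _
    by_cases hx : x = 0
    · simp only [hx, eq_self_iff_true, if_true, Finset.mem_Icc]
      omega
    · simp only [hx, if_false, Finset.mem_Icc]
      constructor
      · exact Nat.one_le_iff_ne_zero.mpr (fun h => hx (by
          rw [← ZMod.natCast_rightInverse x, h, Nat.cast_zero]))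
      · exact (ZMod.val_lt x).le
  · intro m hm
    rw [Finset.mem_Icc] at hm
    rcases eq_or_lt_of_le hm.2 with h | h
    · subst h
      simp [ZMod.natCast_self]
    · have hne : (m : ZMod p) ≠ 0 := by
        intro h0
        have := ZMod.val_natCast (n := p) m
        rw [h0, ZMod.val_zero, Nat.mod_eq_of_lt h] at this
        omega
      simp only [hne, if_false, ZMod.val_natCast, Nat.mod_eq_of_lt h]
  · intro x _
    by_cases hx : x = 0
    · simp [hx, ZMod.natCast_self]
    · simp only [hx, if_false]; exact ZMod.natCast_rightInverse x
  · intro m _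
    rw [ZMod.val_natCast]
    exact (hg.map_mod_nat m).symm

/-- `∑ ψ(x²) = gaussSum χ ψ` for the quadratic character. -/
lemma sum_sq_eq_gaussSum {p : ℕ} [Fact p.Prime] (hp2 : p ≠ 2)
    (ψ : AddChar (ZMod p) ℂ) (hψ : ψ.IsPrimitive) :
    ∑ x : ZMod p, ψ (x ^ 2) =
      gaussSum ((quadraticChar (ZMod p)).ringHomComp (Int.castRingHom ℂ)) ψ := by
  have hchar : ringChar (ZMod p) ≠ 2 := by rw [ZMod.ringChar_zmod_n]; exact hp2
  have hψne : ψ ≠ 1 := by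
    have := hψ (a := 1) (by
      intro h
      exact one_ne_zero h)
    rwa [AddChar.mulShift_one] at this
  classical
  have key : ∀ a : ZMod p,
      ∑ x ∈ Finset.univ.filter (fun x => x ^ 2 = a), ψ (x ^ 2) =
        (((quadraticChar (ZMod p) a : ℤ) : ℂ) + 1) * ψ a := by
    intro a
    have hcard : (({x : ZMod p | x ^ 2 = a}.toFinset.card : ℤ)) =
        quadraticChar (ZMod p) a + 1 := quadraticChar_card_sqrts hchar a
    have hfe : {x : ZMod p | x ^ 2 = a}.toFinset =
        Finset.univ.filter (fun x => x ^ 2 = a) := Set.toFinset_setOf _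
    rw [hfe] at hcard
    calc ∑ x ∈ Finset.univ.filter (fun x => x ^ 2 = a), ψ (x ^ 2)
        = ∑ x ∈ Finset.univ.filter (fun x => x ^ 2 = a), ψ a := by
          apply Finset.sum_congr rfl
          intro x hx
          rw [Finset.mem_filter] at hx
          rw [hx.2]
      _ = ((Finset.univ.filter (fun x => x ^ 2 = a)).card : ℂ) * ψ a := by
          rw [Finset.sum_const, nsmul_eq_mul]
      _ = (((quadraticChar (ZMod p) a : ℤ) : ℂ) + 1) * ψ a := by
          congr 1
          have : ((Finset.univ.filter (fun x : ZMod p => x ^ 2 = a)).card : ℂ) =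
              (((Finset.univ.filter (fun x : ZMod p => x ^ 2 = a)).card : ℤ) : ℂ) := by
            push_cast; ring
          rw [this, hcard]
          push_cast; ring
  calc ∑ x : ZMod p, ψ (x ^ 2)
      = ∑ a : ZMod p, ∑ x ∈ Finset.univ.filter (fun x => x ^ 2 = a), ψ (x ^ 2) :=
        (Finset.sum_fiberwise _ (fun x => x ^ 2) (fun x => ψ (x ^ 2))).symm
    _ = ∑ a : ZMod p, (((quadraticChar (ZMod p) a : ℤ) : ℂ) + 1) * ψ a :=
        Finset.sum_congr rfl (fun a _ => key a)
    _ = (∑ a : ZMod p, ((quadraticChar (ZMod p) a : ℤ) : ℂ) * ψ a) + ∑ a : ZMod p, ψ a := by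
        rw [← Finset.sum_add_distrib]
        apply Finset.sum_congr rfl
        intro a _; ring
    _ = gaussSum ((quadraticChar (ZMod p)).ringHomComp (Int.castRingHom ℂ)) ψ := by
        rw [AddChar.sum_eq_zero_iff_ne_zero.mpr hψne, add_zero]
        rfl

/-- Gauss sum evaluation: for an odd prime `p` and a primitive `2p`-th root of unity `A`,
`(Σ_{m=1}^{2p} (−1)^m A^{m²})² = (−1)^{(p−1)/2} · 4p`. -/
theorem gauss_sum_sq_eq (p : ℕ) (hp : p.Prime) (hodd : Odd p) (A : ℂ)
    (hA : IsPrimitiveRoot A (2 * p)) :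
    (∑ m ∈ Finset.Icc 1 (2 * p), (-1 : ℂ) ^ m * A ^ (m ^ 2)) ^ 2 =
      (-1 : ℂ) ^ ((p - 1) / 2) * (4 * p) := by
  haveI : Fact p.Prime := ⟨hp⟩
  haveI : NeZero p := ⟨hp.pos.ne'⟩
  have hp2 : p ≠ 2 := by rintro rfl; exact (Nat.not_odd_iff_even.mpr (by decide)) hodd
  have hppos : 0 < p := hp.pos
  -- A^p = -1
  have hA2p : A ^ (2 * p) = 1 := hA.pow_eq_one
  have hAp : A ^ p = -1 := by
    have h2 : (A ^ p) ^ 2 = 1 := by rw [← pow_mul, mul_comm]; exact hA2p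
    have hne : A ^ p ≠ 1 := hA.pow_ne_one_of_pos_of_lt hppos.ne' (by omega)
    have hfac : (A ^ p - 1) * (A ^ p + 1) = 0 := by linear_combination h2
    rcases mul_eq_zero.mp hfac with h | h
    · exact absurd (sub_eq_zero.mp h) hne
    · exact eq_neg_of_add_eq_zero_left h
  -- the summand
  set f : ℕ → ℂ := fun m => (-1 : ℂ) ^ m * A ^ (m ^ 2) with hf
  -- periodicity
  have hper : Function.Periodic f p := by
    intro m
    have hnegp : (-1 : ℂ) ^ p = -1 := hodd.neg_one_pow
    have hexp : (m + p) ^ 2 = m ^ 2 + p * (2 * m + p) := by ring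
    have hoddexp : (-1 : ℂ) ^ (2 * m + p) = -1 := by
      have : Odd (2 * m + p) := by
        rcases hodd with ⟨k, hk⟩; exact ⟨m + k, by omega⟩
      exact this.neg_one_pow
    simp only [hf, hexp, pow_add, pow_mul, hAp, hoddexp, hnegp]
    ring
  -- primitive p-th root B = A^4
  have hB2 : IsPrimitiveRoot (A ^ 2) p := hA.pow (by omega) rfl
  have hB : IsPrimitiveRoot (A ^ 4) p := by
    have hc : Nat.Coprime 2 p :=
      Nat.prime_two.coprime_iff_not_dvd.mpr (fun hdvd => by
        have := Nat.odd_iff.mp hodd; omega)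
    have := hB2.pow_of_coprime 2 hc
    rwa [← pow_mul] at this
  set B : ℂ := A ^ 4 with hBdef
  have hBp : B ^ p = 1 := hB.pow_eq_one
  set ψ : AddChar (ZMod p) ℂ := AddChar.zmodChar p hBp with hψdef
  have hψprim : ψ.IsPrimitive := AddChar.zmodChar_primitive_of_primitive_root p hB
  -- split the sum in two halves
  have hsplit : ∑ m ∈ Finset.Icc 1 (2 * p), f m = 2 * ∑ m ∈ Finset.Icc 1 p, f m := by
    have h1 : Finset.Icc 1 (2 * p) = Finset.Ioc 0 (2 * p) := Finset.Icc_add_one_left_eq_Ioc 0 (2 * p)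
    have h2 : Finset.Icc 1 p = Finset.Ioc 0 p := Finset.Icc_add_one_left_eq_Ioc 0 p
    have h3 : ∑ m ∈ Finset.Ioc 0 p, f m + ∑ m ∈ Finset.Ioc p (2 * p), f m =
        ∑ m ∈ Finset.Ioc 0 (2 * p), f m :=
      Finset.sum_Ioc_consecutive f (by omega) (by omega)
    have h4 : ∑ m ∈ Finset.Ioc p (2 * p), f m = ∑ m ∈ Finset.Ioc 0 p, f m := by
      have hmap : (Finset.Ioc 0 p).map (addRightEmbedding p) = Finset.Ioc p (2 * p) := by
        rw [Finset.map_add_right_Ioc]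
        congr 1 <;> omega
      rw [← hmap, Finset.sum_map]
      exact Finset.sum_congr rfl fun m _ => by
        simpa [addRightEmbedding_apply] using hper m
    rw [h1, h2, ← h3, h4]; ring
  -- convert the half sum into a Gauss sum
  have hzmod : ∑ m ∈ Finset.Icc 1 p, f m = ∑ x : ZMod p, f x.val :=
    sum_Icc_eq_sum_zmod hppos f hper
  have h2ne : (2 : ZMod p) ≠ 0 := by
    have : ((2 : ℕ) : ZMod p) ≠ 0 := by
      rw [Ne, ZMod.natCast_eq_zero_iff]
      intro hdvd
      exact hp2 ((Nat.prime_dvd_prime_iff_eq hp Nat.prime_two).mp hdvd)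
    simpa using this
  have hreindex : ∑ x : ZMod p, f x.val = ∑ x : ZMod p, f ((2 * x : ZMod p).val) := by
    exact (Equiv.sum_comp (Equiv.mulLeft₀ (2 : ZMod p) h2ne) (fun y => f y.val)).symm
  have hterm : ∀ x : ZMod p, f ((2 * x : ZMod p).val) = ψ (x ^ 2) := by
    intro x
    have hx1 : (2 * x : ZMod p) = ((2 * x.val : ℕ) : ZMod p) := by
      push_cast
      rw [ZMod.natCast_rightInverse x]
    have hval : (2 * x : ZMod p).val = (2 * x.val) % p := by
      rw [hx1, ZMod.val_natCast]
    have hper' : f ((2 * x.val) % p) = f (2 * x.val) := hper.map_mod_nat _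
    have hf2 : f (2 * x.val) = B ^ (x.val ^ 2) := by
      simp only [hf, hBdef]
      rw [pow_mul, neg_one_sq, one_pow, one_mul, ← pow_mul]
      congr 1
      ring
    have hx2 : (x ^ 2 : ZMod p) = ((x.val ^ 2 : ℕ) : ZMod p) := by
      push_cast
      rw [ZMod.natCast_rightInverse x]
    rw [hval, hper', hf2, hx2, hψdef, AddChar.zmodChar_apply']
  have hgauss : ∑ m ∈ Finset.Icc 1 p, f m =
      gaussSum ((quadraticChar (ZMod p)).ringHomComp (Int.castRingHom ℂ)) ψ := by
    rw [hzmod, hreindex]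
    rw [Finset.sum_congr rfl (fun x _ => hterm x)]
    exact sum_sq_eq_gaussSum hp2 ψ hψprim
  -- the Gauss sum square
  set χ : MulChar (ZMod p) ℂ := (quadraticChar (ZMod p)).ringHomComp (Int.castRingHom ℂ) with hχdef
  have hchar : ringChar (ZMod p) ≠ 2 := by rw [ZMod.ringChar_zmod_n]; exact hp2
  have hχ1 : χ ≠ 1 := by
    obtain ⟨a, ha⟩ := quadraticChar_exists_neg_one' hchar
    refine MulChar.ne_one_iff.mpr ⟨a, ?_⟩
    simp only [hχdef, MulChar.ringHomComp_apply, ha]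
    norm_num
  have hχ2 : χ.IsQuadratic := (quadraticChar_isQuadratic (ZMod p)).comp _
  have hGsq : gaussSum χ ψ ^ 2 = χ (-1) * (p : ℂ) := by
    have := gaussSum_sq hχ1 hχ2 hψprim
    rwa [ZMod.card] at this
  have hχneg : χ (-1) = (-1 : ℂ) ^ ((p - 1) / 2) := by
    have h1 : quadraticChar (ZMod p) (-1) = ZMod.χ₄ (Fintype.card (ZMod p)) :=
      quadraticChar_neg_one hchar
    have h2 : ZMod.χ₄ (p : ZMod 4) = (-1 : ℤ) ^ (p / 2) :=
      ZMod.χ₄_eq_neg_one_pow (Nat.odd_iff.mp hodd)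
    have h3 : p / 2 = (p - 1) / 2 := by
      rcases hodd with ⟨k, hk⟩; omega
    rw [ZMod.card] at h1
    simp only [hχdef, MulChar.ringHomComp_apply, h1, h2, h3]
    simp
  calc (∑ m ∈ Finset.Icc 1 (2 * p), (-1 : ℂ) ^ m * A ^ (m ^ 2)) ^ 2
      = (2 * gaussSum χ ψ) ^ 2 := by rw [show (∑ m ∈ Finset.Icc 1 (2 * p),
          (-1 : ℂ) ^ m * A ^ (m ^ 2)) = ∑ m ∈ Finset.Icc 1 (2 * p), f m from rfl,
          hsplit, hgauss]
    _ = 4 * (gaussSum χ ψ ^ 2) := by ring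
    _ = 4 * (χ (-1) * (p : ℂ)) := by rw [hGsq]
    _ = (-1 : ℂ) ^ ((p - 1) / 2) * (4 * p) := by rw [hχneg]; ring
end

section
/- Let p be an odd prime, let A ∈ ℂ be a primitive 2p-th root of unity, let k ∈ ℂ satisfy k² = A^{−6−p(p+1)/2}, and set η = k · (1/(2p)) · A³ · (A² − A⁻²) · A^{p(p−1)/2} · Σ_{m=1}^{2p} (−1)^m A^{m²}. Then η² = −(A² − A⁻²)²/p. -/
open Finset in
/-- Square of the quadratic Gauss sum attached to a primitive `p`-th root of unity. -/
lemma gauss_sq_aux (p : ℕ) [hp : Fact p.Prime] (hp2 : p ≠ 2) {ω : ℂ}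
    (hω : IsPrimitiveRoot ω p) :
    (∑ x : ZMod p, ω ^ (x.val ^ 2)) ^ 2 = (-1 : ℂ) ^ (p / 2) * p := by
  haveI : NeZero p := ⟨hp.out.ne_zero⟩
  have hchar : ringChar (ZMod p) ≠ 2 := by rw [ZMod.ringChar_zmod_n]; exact hp2
  have hω1 : ω ^ p = 1 := hω.pow_eq_one
  set ψ : AddChar (ZMod p) ℂ := AddChar.zmodChar p hω1 with hψdef
  have hψprim : ψ.IsPrimitive := AddChar.zmodChar_primitive_of_primitive_root p hω
  have hψne : ψ ≠ 1 := by
    intro h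
    have := hψprim (a := 1) one_ne_zero
    rw [AddChar.mulShift_one, h] at this
    exact this rfl
  set χ : MulChar (ZMod p) ℂ := (quadraticChar (ZMod p)).ringHomComp (Int.castRingHom ℂ) with hχdef
  have hχne : χ ≠ 1 :=
    (MulChar.ringHomComp_ne_one_iff Int.cast_injective).mpr (quadraticChar_ne_one hchar)
  have hχquad : χ.IsQuadratic := (quadraticChar_isQuadratic (ZMod p)).comp _
  have h0 : ∀ x : ZMod p, ω ^ (x.val ^ 2) = ψ (x ^ 2) := by
    intro x
    have : ((x.val ^ 2 : ℕ) : ZMod p) = x ^ 2 := by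
      push_cast [ZMod.natCast_val, ZMod.cast_id]
      ring
    rw [← this, hψdef, AddChar.zmodChar_apply']
  have h1 : ∑ x : ZMod p, ω ^ (x.val ^ 2)
      = ∑ a : ZMod p, (((quadraticChar (ZMod p) a : ℤ) + 1 : ℤ) : ℂ) * ψ a := by
    simp_rw [h0]
    rw [← Finset.sum_fiberwise' Finset.univ (fun x : ZMod p => x ^ 2) (fun a => ψ a)]
    refine Finset.sum_congr rfl fun a _ => ?_
    rw [Finset.sum_const, nsmul_eq_mul]
    congr 1
    have hcard := quadraticChar_card_sqrts hchar a
    rw [Set.toFinset_setOf] at hcard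
    exact_mod_cast hcard
  have h2 : ∑ a : ZMod p, (((quadraticChar (ZMod p) a : ℤ) + 1 : ℤ) : ℂ) * ψ a
      = gaussSum χ ψ := by
    push_cast
    simp_rw [add_mul, one_mul]
    rw [Finset.sum_add_distrib, AddChar.sum_eq_zero_of_ne_one hψne, add_zero]
    rfl
  have h3 := gaussSum_sq hχne hχquad hψprim
  rw [h1, h2, h3]
  congr 1
  · have : χ (-1) = ((quadraticChar (ZMod p) (-1) : ℤ) : ℂ) := rfl
    rw [this, quadraticChar_neg_one hchar, ZMod.card,
      ZMod.χ₄_eq_neg_one_pow (Nat.odd_iff.mp (hp.out.odd_of_ne_two hp2))]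
    push_cast
    ring
  · rw [ZMod.card]

/-- For an odd prime `p`, a primitive `2p`-th root of unity `A`, and `k` with
`k² = A^{−6−p(p+1)/2}`, the quantity
`η = k·(1/2p)·A³(A²−A⁻²)A^{p(p−1)/2}·Σ_{m=1}^{2p}(−1)^m A^{m²}` satisfies
`η² = −(A²−A⁻²)²/p`. -/
theorem eta_sq_eq (p : ℕ) (hp : p.Prime) (hodd : Odd p) (A k η : ℂ)
    (hA : IsPrimitiveRoot A (2 * p))
    (hk : k ^ 2 = A ^ (-(6 + (p * (p + 1) / 2 : ℕ) : ℤ)))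
    (hη : η = k * (1 / (2 * p)) * A ^ 3 * (A ^ 2 - A ^ (-2 : ℤ)) *
      A ^ (p * (p - 1) / 2) * ∑ m ∈ Finset.Icc 1 (2 * p), (-1 : ℂ) ^ m * A ^ (m ^ 2)) :
    η ^ 2 = -(A ^ 2 - A ^ (-2 : ℤ)) ^ 2 / p := by
  haveI : Fact p.Prime := ⟨hp⟩
  have hp2 : p ≠ 2 := by rintro rfl; exact (Nat.not_odd_iff_even.mpr (by norm_num)) hodd
  have hp3 : 3 ≤ p := hp.two_le.lt_of_ne (Ne.symm hp2)
  have hpm : p % 2 = 1 := Nat.odd_iff.mp hodd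
  have hA1 : A ^ (2 * p) = 1 := hA.pow_eq_one
  have hA0 : A ≠ 0 := by
    intro h
    rw [h, zero_pow (by positivity)] at hA1
    exact zero_ne_one hA1
  -- A ^ p = -1
  have hApne : A ^ p ≠ 1 := by
    intro h
    have hdvd := hA.dvd_of_pow_eq_one p h
    have := Nat.le_of_dvd (by omega) hdvd
    omega
  have hAp : A ^ p = -1 := by
    have hsq : (A ^ p - 1) * (A ^ p + 1) = 0 := by
      have : A ^ p * A ^ p = 1 := by rw [← pow_add]; rw [show p + p = 2 * p by ring]; exact hA1
      linear_combination this
    rcases mul_eq_zero.mp hsq with h | h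
    · exact absurd (by linear_combination h) hApne
    · linear_combination h
  -- ω := A ^ (p + 1) is a primitive p-th root of unity
  have hA2 : IsPrimitiveRoot (A ^ 2) p := hA.pow (by positivity) rfl
  have hcop : ((p + 1) / 2).Coprime p := by
    have h1 : ¬ p ∣ (p + 1) / 2 := by
      intro hdvd
      have := Nat.le_of_dvd (by omega) hdvd
      omega
    exact (hp.coprime_iff_not_dvd.mpr h1).symm
  set ω : ℂ := A ^ (p + 1) with hωdef
  have hωeq : ω = (A ^ 2) ^ ((p + 1) / 2) := by
    rw [hωdef, ← pow_mul]
    congr 1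
    omega
  have hω : IsPrimitiveRoot ω p := by
    rw [hωeq]; exact hA2.pow_of_coprime _ hcop
  have hω1 : ω ^ p = 1 := hω.pow_eq_one
  -- rewrite the summand
  have key : ∀ m : ℕ, (-1 : ℂ) ^ m * A ^ (m ^ 2) = ω ^ (m ^ 2) := by
    intro m
    have h1 : ω ^ (m ^ 2) = A ^ (m ^ 2) * (A ^ p) ^ (m ^ 2) := by
      rw [hωdef, ← pow_mul, ← pow_mul, ← pow_add]
      ring_nf
    have h2 : (A ^ p) ^ (m ^ 2) = (-1 : ℂ) ^ m := by
      rw [hAp]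
      rcases Nat.even_or_odd m with h | h
      · rw [Even.neg_one_pow h, Even.neg_one_pow (by rw [pow_two]; exact h.mul_right m)]
      · rw [Odd.neg_one_pow h, Odd.neg_one_pow (h.pow)]
    rw [h1, h2]; ring
  -- periodicity
  have hper : ∀ m : ℕ, ω ^ ((m + p) ^ 2) = ω ^ (m ^ 2) := by
    intro m
    have : (m + p) ^ 2 = m ^ 2 + p * (2 * m + p) := by ring
    rw [this, pow_add, pow_mul, hω1, one_pow, mul_one]
  -- the sum over Icc 1 (2p) equals the sum over range (2p)
  have hIcc : ∑ m ∈ Finset.Icc 1 (2 * p), ω ^ (m ^ 2)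
      = ∑ m ∈ Finset.range (2 * p), ω ^ (m ^ 2) := by
    have hend : ω ^ ((2 * p) ^ 2) = 1 := by
      have : (2 * p) ^ 2 = p * (4 * p) := by ring
      rw [this, pow_mul, hω1, one_pow]
    have e1 : Finset.Icc 1 (2 * p) = Finset.Ico 1 (2 * p + 1) := by
      rw [Finset.Ico_add_one_right_eq_Icc]
    have e2 : ∑ m ∈ Finset.range (2 * p + 1), ω ^ (m ^ 2)
        = ω ^ (0 ^ 2) + ∑ m ∈ Finset.Ico 1 (2 * p + 1), ω ^ (m ^ 2) := by
      rw [Finset.range_eq_Ico]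
      exact Finset.sum_eq_sum_Ico_succ_bot (by omega) _
    rw [Finset.sum_range_succ] at e2
    rw [e1]
    have : ω ^ (0 ^ 2) = 1 := by norm_num
    rw [this, hend] at e2
    linear_combination -e2
  -- doubling
  have hdouble : ∑ m ∈ Finset.range (2 * p), ω ^ (m ^ 2)
      = 2 * ∑ m ∈ Finset.range p, ω ^ (m ^ 2) := by
    rw [two_mul, Finset.sum_range_add]
    have : ∀ m ∈ Finset.range p, ω ^ ((p + m) ^ 2) = ω ^ (m ^ 2) := by
      intro m _
      rw [add_comm p m]; exact hper m
    rw [Finset.sum_congr rfl this, two_mul]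
  -- identify with the ZMod p sum
  haveI : NeZero p := ⟨hp.ne_zero⟩
  have hZ : ∑ m ∈ Finset.range p, ω ^ (m ^ 2) = ∑ x : ZMod p, ω ^ (x.val ^ 2) := by
    refine Finset.sum_nbij' (fun m => (m : ZMod p)) (fun x => x.val) ?_ ?_ ?_ ?_ ?_
    · intro m hm; exact Finset.mem_univ _
    · intro x _; exact Finset.mem_range.mpr (ZMod.val_lt x)
    · intro m hm; exact ZMod.val_cast_of_lt (Finset.mem_range.mp hm)
    · intro x _; exact ZMod.natCast_zmod_val x
    · intro m hm
      rw [ZMod.val_cast_of_lt (Finset.mem_range.mp hm)]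
  -- the square of the full sum
  have hS : (∑ m ∈ Finset.Icc 1 (2 * p), (-1 : ℂ) ^ m * A ^ (m ^ 2)) ^ 2
      = 4 * ((-1 : ℂ) ^ (p / 2) * p) := by
    have : ∑ m ∈ Finset.Icc 1 (2 * p), (-1 : ℂ) ^ m * A ^ (m ^ 2)
        = 2 * ∑ x : ZMod p, ω ^ (x.val ^ 2) := by
      rw [Finset.sum_congr rfl fun m _ => key m, hIcc, hdouble, hZ]
    rw [this, mul_pow, gauss_sq_aux p hp2 hω]
    ring
  -- power bookkeeping
  set N : ℕ := p * (p + 1) / 2 with hNdef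
  have hkk : k ^ 2 = (A ^ (6 + N))⁻¹ := by
    have hcast : (-(6 + (N : ℤ))) = -((6 + N : ℕ) : ℤ) := by push_cast; ring
    rw [hk, hcast, zpow_neg, zpow_natCast]
  have hAM : (A ^ (p * (p - 1) / 2)) ^ 2 = 1 := by
    obtain ⟨t, ht⟩ : ∃ t, p - 1 = 2 * t := ⟨(p - 1) / 2, by omega⟩
    have h1 : p * (p - 1) / 2 = p * t := by
      rw [ht, show p * (2 * t) = 2 * (p * t) by ring,
        Nat.mul_div_cancel_left _ (by norm_num)]
    rw [h1, ← pow_mul, show p * t * 2 = 2 * p * t by ring, pow_mul, hA1, one_pow]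
  have hAN : A ^ (6 + N) = A ^ 6 * (-1) * (-1 : ℂ) ^ (p / 2) := by
    obtain ⟨s, hs⟩ : ∃ s, p + 1 = 2 * s := ⟨(p + 1) / 2, by omega⟩
    have hN : N = p * s := by
      rw [hNdef, hs, show p * (2 * s) = 2 * (p * s) by ring,
        Nat.mul_div_cancel_left _ (by norm_num)]
    have hs2 : s = p / 2 + 1 := by omega
    rw [pow_add, hN, pow_mul, hAp, hs2, pow_succ]
    ring
  have hA6N : A ^ (6 + N) ≠ 0 := pow_ne_zero _ hA0
  have hpC : (p : ℂ) ≠ 0 := Nat.cast_ne_zero.mpr hp.ne_zero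
  have hsgn : ((-1 : ℂ) ^ (p / 2)) * ((-1 : ℂ) ^ (p / 2)) = 1 := by
    rw [← pow_add, ← two_mul, pow_mul]
    norm_num
  -- final computation
  rw [hη, mul_pow, mul_pow, mul_pow, mul_pow, mul_pow, hkk, hAM, hS, hAN]
  have hA6 : (A : ℂ) ^ 6 ≠ 0 := pow_ne_zero _ hA0
  have hm1 : ((-1 : ℂ) ^ (p / 2)) ≠ 0 := by
    intro h
    rw [h] at hsgn
    norm_num at hsgn
  field_simp
  ring_nf
end

section
/- Let p be an odd prime, let A ∈ ℂ be a primitive 2p-th root of unity, and let κ ∈ ℂ be a root of unity. If a complex number x lies both in the subring ℤ[A, κ] of ℂ and in the subring ℤ[A, 1/p] of ℂ, then x lies in the subring ℤ[A]. -/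
open Algebra IntermediateField

/-- A root of unity is integral over ℤ. -/
private lemma isIntegral_of_rootOfUnity {z : ℂ} {m : ℕ} (hm : 0 < m) (hz : z ^ m = 1) :
    IsIntegral ℤ z := by
  refine ⟨Polynomial.X ^ m - 1, Polynomial.monic_X_pow_sub_C 1 hm.ne', ?_⟩
  simp [hz]

/-- For an odd prime `p`, a primitive `2p`-th root of unity `A`, and a root of unity `κ`,
`ℤ[A, κ] ∩ ℤ[A, 1/p] = ℤ[A]` inside `ℂ`. -/
theorem mem_adjoin_of_mem_adjoin_root_of_unity_of_mem_adjoin_inv_prime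
    (p : ℕ) (hp : p.Prime) (hodd : Odd p) (A κ : ℂ)
    (hA : IsPrimitiveRoot A (2 * p))
    (hκ : ∃ m : ℕ, 0 < m ∧ κ ^ m = 1)
    (x : ℂ)
    (hx₁ : x ∈ Algebra.adjoin ℤ ({A, κ} : Set ℂ))
    (hx₂ : x ∈ Algebra.adjoin ℤ ({A, (p : ℂ)⁻¹} : Set ℂ)) :
    x ∈ Algebra.adjoin ℤ ({A} : Set ℂ) := by
  obtain ⟨m, hm, hκm⟩ := hκ
  have hppos : 0 < p := hp.pos
  -- ζ = A² is a primitive p-th root of unity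
  set ζ : ℂ := A ^ 2 with hζdef
  have hζ : IsPrimitiveRoot ζ p := hA.pow (by positivity) (by ring)
  -- A^p = -1
  have hApow : A ^ p = -1 := by
    have h2 : (A ^ p) ^ 2 = 1 := by
      rw [← pow_mul, mul_comm]; exact hA.pow_eq_one
    have hne : A ^ p ≠ 1 := by
      intro h
      have hdvd := hA.dvd_of_pow_eq_one p h
      have := Nat.le_of_dvd hppos hdvd
      omega
    rcases mul_self_eq_one_iff.mp (by rw [pow_two] at h2; exact h2) with h | h
    · exact absurd h hne
    · exact h
  -- hence A ∈ ℤ[ζ]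
  have hAmem : A ∈ Algebra.adjoin ℤ ({ζ} : Set ℂ) := by
    obtain ⟨k, hk⟩ := hodd
    have : A = -(ζ ^ (k + 1)) := by
      have : ζ ^ (k + 1) = A ^ (p + 1) := by
        rw [hζdef, ← pow_mul]; congr 1; omega
      rw [this, pow_succ, hApow]; ring
    rw [this]
    exact Subalgebra.neg_mem _ (Subalgebra.pow_mem _ (self_mem_adjoin_singleton ℤ ζ) _)
  have hζmem : ζ ∈ Algebra.adjoin ℤ ({A} : Set ℂ) :=
    Subalgebra.pow_mem _ (self_mem_adjoin_singleton ℤ A) 2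
  -- ℤ[A] = ℤ[ζ]
  have hadj : Algebra.adjoin ℤ ({A} : Set ℂ) = Algebra.adjoin ℤ ({ζ} : Set ℂ) := by
    apply le_antisymm
    · exact Algebra.adjoin_le (by simpa using hAmem)
    · exact Algebra.adjoin_le (by simpa using hζmem)
  rw [hadj]
  -- x is integral over ℤ
  have hxint : IsIntegral ℤ x := by
    have h1 : Algebra.adjoin ℤ ({A, κ} : Set ℂ) ≤ integralClosure ℤ ℂ := by
      apply Algebra.adjoin_le
      rintro z (rfl | rfl)
      · exact isIntegral_of_rootOfUnity (by positivity) hA.pow_eq_one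
      · exact isIntegral_of_rootOfUnity hm hκm
    exact h1 hx₁
  -- the field K = ℚ(ζ)
  set K : IntermediateField ℚ ℂ := ℚ⟮ζ⟯ with hKdef
  have hζK : ζ ∈ K := IntermediateField.mem_adjoin_simple_self ℚ ζ
  have hAK : A ∈ K := by
    have : Algebra.adjoin ℤ ({ζ} : Set ℂ) ≤ Subalgebra.restrictScalars ℤ K.toSubalgebra :=
      Algebra.adjoin_le (by simpa using hζK)
    exact this hAmem
  -- x ∈ K
  have hxK : x ∈ K := by
    have h2 : Algebra.adjoin ℤ ({A, (p : ℂ)⁻¹} : Set ℂ) ≤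
        Subalgebra.restrictScalars ℤ K.toSubalgebra := by
      apply Algebra.adjoin_le
      rintro z (rfl | rfl)
      · exact hAK
      · have h3 : (algebraMap ℚ ℂ) ((p : ℚ)⁻¹) ∈ K := K.algebraMap_mem ((p : ℚ)⁻¹)
        have h4 : (algebraMap ℚ ℂ) ((p : ℚ)⁻¹) = ((p : ℂ))⁻¹ := by push_cast; ring
        rwa [h4] at h3
    exact h2 hx₂
  -- set up the cyclotomic extension structure on K
  set q : ℕ+ := ⟨p, hppos⟩ with hq
  haveI : Fact (q : ℕ).Prime := ⟨hp⟩
  set ζK : K := ⟨ζ, hζK⟩ with hζKdef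
  have hζKprim : IsPrimitiveRoot ζK q := by
    rw [← IsPrimitiveRoot.coe_submonoidClass_iff]
    exact hζ
  haveI : IsCyclotomicExtension {(q : ℕ)} ℚ K := by
    have h := hζKprim.adjoin_isCyclotomicExtension ℚ
    have htop : Algebra.adjoin ℚ ({ζK} : Set K) = ⊤ := by
      have := IntermediateField.adjoin_simple_toSubalgebra_of_isAlgebraic
        (F := ℚ) (α := ζ) ((hζ.isIntegral hppos).tower_top.isAlgebraic)
      apply Algebra.eq_top_iff.mpr
      intro y
      have hy : (y : ℂ) ∈ Algebra.adjoin ℚ ({ζ} : Set ℂ) := by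
        rw [← this]; exact y.2
      have : (y : ℂ) ∈ (Algebra.adjoin ℚ ({ζK} : Set K)).map K.val := by
        erw [AlgHom.map_adjoin]
        convert hy using 2
        · rfl
        · rfl
        · simp [hζKdef]
      obtain ⟨z, hz, hzy⟩ := this
      have : z = y := Subtype.ext hzy
      rwa [← this]
    exact IsCyclotomicExtension.equiv _ _ _
      ((Subalgebra.equivOfEq _ _ htop).trans Subalgebra.topEquiv)
  -- ℤ[ζK] is the integral closure of ℤ in K
  have hic := IsCyclotomicExtension.Rat.isIntegralClosure_adjoin_singleton_of_prime
    (K := K) (p := q) hζKprim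
  -- conclude
  set y : K := ⟨x, hxK⟩ with hy
  have hyint : IsIntegral ℤ y := by
    rw [← isIntegral_algebraMap_iff (algebraMap K ℂ).injective]
    exact hxint
  obtain ⟨z, hz⟩ := hic.isIntegral_iff.mp hyint
  have hymem : y ∈ Algebra.adjoin ℤ ({ζK} : Set K) := by
    rw [← hz]; exact z.2
  have : x ∈ (Algebra.adjoin ℤ ({ζK} : Set K)).map (K.val.restrictScalars ℤ) :=
    ⟨y, hymem, rfl⟩
  rw [AlgHom.map_adjoin] at this
  convert this using 3
  · rfl
  · simp [hζKdef]
end
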